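/- Let A be an abelian category and U a full additive subcategory of A which is cogenerating (every object embeds into an object of U). Then for any j ≥ 1, every exact sequence 0 → E_{j+1} → E_j → ⋯ → E_1 → E_0 → 0 is Yoneda equivalent (as a j-fold extension of E_0 by E_{j+1}) to an exact sequence 0 → E_{j+1} → U_j → ⋯ → U_2 → X → E_0 → 0 in which U_2, …, U_j all lie in U. -/

import Mathlib

open CategoryTheory CategoryTheory.Limits

universe v u

variable (A : Type u) [Category.{v} A] [Abelian A]

/-- An exact sequence `0 → Y → E_n → ⋯ → E_1 → X → 0` with `n` middle terms `E_n, …, E_1`,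
encoded as an `ℕ`-indexed complex with `ob 0 ≅ X`, `ob (n+1) ≅ Y`, zero objects in degrees
above `n+1`, exactness at every position `≥ 1` and an epimorphism at the bottom. -/
structure ExtSeq (n : ℕ) (X Y : A) where
  ob : ℕ → A
  d : ∀ i : ℕ, ob (i + 1) ⟶ ob i
  iso0 : ob 0 ≅ X
  isoTop : ob (n + 1) ≅ Y
  is_zero : ∀ i, n + 1 < i → IsZero (ob i)
  w : ∀ i, d (i + 1) ≫ d i = 0
  ex : ∀ i, (ShortComplex.mk (d (i + 1)) (d i) (w i)).Exact
  epi0 : Epi (d 0)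

variable {A}

/-- A morphism of `n`-extensions inducing the identity on the two end terms. -/
structure ExtSeqHom {n : ℕ} {X Y : A} (s t : ExtSeq A n X Y) where
  φ : ∀ i, s.ob i ⟶ t.ob i
  comm : ∀ i, s.d i ≫ φ i = φ (i + 1) ≫ t.d i
  φ0 : φ 0 = s.iso0.hom ≫ t.iso0.inv
  φTop : φ (n + 1) = s.isoTop.hom ≫ t.isoTop.inv

/-- Yoneda equivalence of `n`-fold extensions: the equivalence relation generated by the
existence of a morphism of extensions fixing the end terms. -/
def YonedaEquiv {n : ℕ} {X Y : A} : ExtSeq A n X Y → ExtSeq A n X Y → Prop :=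
  Relation.EqvGen fun s t => Nonempty (ExtSeqHom s t)

variable (A) in
/-- `extVanish A n X Y` expresses the vanishing of the Yoneda Ext-group `Ext^n_A(X, Y)`:
all `n`-fold extensions of `X` by `Y` are Yoneda equivalent. -/
def extVanish (n : ℕ) (X Y : A) : Prop :=
  ∀ s t : ExtSeq A n X Y, YonedaEquiv s t

variable (A) in
/-- `coresSet 𝒰 j` is the class `𝒰^j(A)` of objects `E` admitting an exact sequence
`0 → E → U^1 → ⋯ → U^j → 0` with all `U^i ∈ 𝒰`. -/
def coresSet (𝒰 : Set A) : ℕ → Set A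
  | 0 => {E | IsZero E}
  | j + 1 => {E | ∃ (V : A) (f : E ⟶ V), V ∈ 𝒰 ∧ Mono f ∧ cokernel f ∈ coresSet 𝒰 j}

variable (A) in
/-- `resSet 𝒰 j` is the class `𝒰_j(A)` of objects `E` admitting an exact sequence
`0 → U_j → ⋯ → U_1 → E → 0` with all `U_i ∈ 𝒰`. -/
def resSet (𝒰 : Set A) : ℕ → Set A
  | 0 => {E | IsZero E}
  | j + 1 => {E | ∃ (V : A) (f : V ⟶ E), V ∈ 𝒰 ∧ Epi f ∧ kernel f ∈ resSet 𝒰 j}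

/-- The extension lies (admissibly) in the subcategory `𝒮`: all its terms and all the
images of its differentials (the splice objects) belong to `𝒮`. -/
def ExtSeq.allIn {n : ℕ} {X Y : A} (s : ExtSeq A n X Y) (𝒮 : Set A) : Prop :=
  (∀ i, i ≤ n + 1 → s.ob i ∈ 𝒮) ∧ ∀ i, 1 ≤ i → i ≤ n → (image (s.d i) : A) ∈ 𝒮

/-- Yoneda equivalence computed inside the subcategory `𝒮`: the equivalence relation
generated by morphisms of extensions between extensions lying in `𝒮`. -/
def YonedaEquivIn (𝒮 : Set A) {n : ℕ} {X Y : A} :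
    ExtSeq A n X Y → ExtSeq A n X Y → Prop :=
  Relation.EqvGen fun s t => s.allIn 𝒮 ∧ t.allIn 𝒮 ∧ Nonempty (ExtSeqHom s t)

variable (A) in
/-- `𝒰` is closed under `d`-extensions in `A`. -/
def DExtClosed (𝒰 : Set A) (d : ℕ) : Prop :=
  ∀ (X Y : A), X ∈ 𝒰 → Y ∈ 𝒰 → ∀ s : ExtSeq A d X Y,
    ∃ t : ExtSeq A d X Y, (∀ i, 1 ≤ i → i ≤ d → t.ob i ∈ 𝒰) ∧ YonedaEquiv s t

/-! ### Auxiliary machinery for the proof -/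

section Surgery

open CategoryTheory.Category


lemma exact_comp_mono_aux {X₁ X₂ X₃ X₄ : A} {f : X₁ ⟶ X₂} {g : X₂ ⟶ X₃} (m : X₃ ⟶ X₄)
    [Mono m] {w : f ≫ g = 0} (h : (ShortComplex.mk f g w).Exact) :
    (ShortComplex.mk f (g ≫ m) (by rw [← assoc, w, zero_comp])).Exact := by
  rw [ShortComplex.exact_iff_exact_up_to_refinements] at h ⊢
  intro T a ha
  refine h a ?_
  rw [← cancel_mono m, assoc, zero_comp]
  simpa using ha

lemma exact_conj_aux {A₁ A₂ B₁ B₂ C₁ C₂ : A} (eA : A₁ = A₂) (eB : B₁ = B₂) (eC : C₁ = C₂)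
    {f : A₂ ⟶ B₂} {g : B₂ ⟶ C₂} {w : f ≫ g = 0} (h : (ShortComplex.mk f g w).Exact) :
    (ShortComplex.mk (eqToHom eA ≫ f ≫ eqToHom eB.symm)
      (eqToHom eB ≫ g ≫ eqToHom eC.symm)
      (by subst eA; subst eB; subst eC; simpa using w)).Exact := by
  subst eA; subst eB; subst eC
  simpa using h

lemma exact_congr_aux {X₁ X₂ X₃ : A} {f f' : X₁ ⟶ X₂} {g g' : X₂ ⟶ X₃} (hf : f = f')
    (hg : g = g') {w : f ≫ g = 0} {w' : f' ≫ g' = 0}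
    (h : (ShortComplex.mk f' g' w').Exact) : (ShortComplex.mk f g w).Exact := by
  subst hf; subst hg; exact h

variable {j : ℕ} {X Y : A}

/-- Objects of the modified sequence. -/
noncomputable def sOb (s : ExtSeq A j X Y) (c : ℕ) (V : A) (m : s.ob (c + 2) ⟶ V) (i : ℕ) : A :=
  if i = c + 2 then V else if i = c + 1 then pushout m (s.d (c + 1)) else s.ob i

variable (s : ExtSeq A j X Y) (c : ℕ) (V : A) (m : s.ob (c + 2) ⟶ V)

lemma sOb_ne (i : ℕ) (h2 : i ≠ c + 2) (h1 : i ≠ c + 1) : sOb s c V m i = s.ob i := by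
  simp [sOb, h1, h2]

lemma sOb_top : sOb s c V m (c + 2) = V := by simp [sOb]

lemma sOb_mid : sOb s c V m (c + 1) = pushout m (s.d (c + 1)) := by
  rw [sOb, if_neg (by omega), if_pos rfl]

/-- The map out of the pushout to the next term. -/
noncomputable def sqq : pushout m (s.d (c + 1)) ⟶ s.ob c :=
  pushout.desc 0 (s.d c) (by rw [comp_zero, s.w c])

@[simp] lemma inl_sq : pushout.inl m (s.d (c + 1)) ≫ sqq s c V m = 0 := by
  unfold sqq; exact pushout.inl_desc ..

@[simp] lemma inr_sq : pushout.inr m (s.d (c + 1)) ≫ sqq s c V m = s.d c := by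
  unfold sqq; exact pushout.inr_desc ..

/-- Differentials of the modified sequence. -/
noncomputable def sD (i : ℕ) : sOb s c V m (i + 1) ⟶ sOb s c V m i :=
  if h2 : i = c + 2 then
    eqToHom (sOb_ne s c V m (i + 1) (by omega) (by omega)) ≫ s.d i ≫
      eqToHom (congrArg s.ob h2) ≫ m ≫
      eqToHom (show V = sOb s c V m i by rw [h2, sOb_top])
  else if h1 : i = c + 1 then
    eqToHom (show sOb s c V m (i + 1) = V by rw [h1]; exact sOb_top s c V m) ≫
      pushout.inl m (s.d (c + 1)) ≫
      eqToHom (show pushout m (s.d (c + 1)) = sOb s c V m i by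
        rw [h1]; exact (sOb_mid s c V m).symm)
  else if h0 : i = c then
    eqToHom (show sOb s c V m (i + 1) = pushout m (s.d (c + 1)) by
        rw [h0]; exact sOb_mid s c V m) ≫ sqq s c V m ≫
      eqToHom (show s.ob c = sOb s c V m i by
        rw [h0]; exact (sOb_ne s c V m c (by omega) (by omega)).symm)
  else
    eqToHom (sOb_ne s c V m (i + 1) (by omega) (by omega)) ≫ s.d i ≫
      eqToHom (sOb_ne s c V m i h2 h1).symm

lemma sD_top :
    sD s c V m (c + 2) =
      eqToHom (sOb_ne s c V m (c + 3) (by omega) (by omega)) ≫ (s.d (c + 2) ≫ m) ≫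
        eqToHom (sOb_top s c V m).symm := by
  rw [sD, dif_pos rfl]
  simp

lemma sD_mid :
    sD s c V m (c + 1) =
      eqToHom (sOb_top s c V m) ≫ pushout.inl m (s.d (c + 1)) ≫
        eqToHom (sOb_mid s c V m).symm := by
  rw [sD, dif_neg (by omega), dif_pos rfl]

lemma sD_q :
    sD s c V m c =
      eqToHom (sOb_mid s c V m) ≫ sqq s c V m ≫
        eqToHom (sOb_ne s c V m c (by omega) (by omega)).symm := by
  rw [sD, dif_neg (by omega), dif_neg (by omega), dif_pos rfl]

lemma sD_of (i : ℕ) (h2 : i ≠ c + 2) (h1 : i ≠ c + 1) (h0 : i ≠ c) :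
    sD s c V m i =
      eqToHom (sOb_ne s c V m (i + 1) (by omega) (by omega)) ≫ s.d i ≫
        eqToHom (sOb_ne s c V m i h2 h1).symm := by
  rw [sD, dif_neg h2, dif_neg h1, dif_neg h0]

lemma key_w : biprod.lift m (-(s.d (c + 1))) ≫
    biprod.desc (pushout.inl m (s.d (c + 1))) (pushout.inr m (s.d (c + 1))) = 0 := by
  rw [biprod.lift_desc, pushout.condition]
  simp

lemma key_exact :
    (ShortComplex.mk (biprod.lift m (-(s.d (c + 1))))
      (biprod.desc (pushout.inl m (s.d (c + 1))) (pushout.inr m (s.d (c + 1))))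
      (key_w s c V m)).Exact :=
  ShortComplex.exact_of_g_is_cokernel _
    ((IsPushout.of_hasPushout m (s.d (c + 1))).isColimitCokernelCofork)

lemma key_epi :
    Epi (biprod.desc (pushout.inl m (s.d (c + 1))) (pushout.inr m (s.d (c + 1)))) := by
  constructor
  intro W u v h
  apply pushout.hom_ext
  · simpa using biprod.inl ≫= h
  · simpa using biprod.inr ≫= h

lemma exact_step2 :
    (ShortComplex.mk (s.d (c + 2) ≫ m) (pushout.inl m (s.d (c + 1)))
      (by rw [assoc, pushout.condition, ← assoc, s.w (c + 1), zero_comp])).Exact := by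
  rw [ShortComplex.exact_iff_exact_up_to_refinements]
  intro T a ha
  obtain ⟨T', π, hπ, x, hx⟩ := (key_exact s c V m).exact_up_to_refinements (a ≫ biprod.inl)
    (by dsimp only [ShortComplex.mk] at ha ⊢; rw [assoc, biprod.inl_desc]; exact ha)
  have h1 : π ≫ a = x ≫ m := by simpa using hx =≫ biprod.fst
  have h2 : x ≫ s.d (c + 1) = 0 := by
    have h := hx =≫ biprod.snd
    simp only [assoc, biprod.inl_snd, comp_zero, biprod.lift_snd, Preadditive.comp_neg] at h
    exact neg_eq_zero.mp h.symm
  obtain ⟨T'', π', hπ', y, hy⟩ := (s.ex (c + 1)).exact_up_to_refinements x h2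
  refine ⟨T'', π' ≫ π, epi_comp _ _, y, ?_⟩
  dsimp only [ShortComplex.mk] at hy ⊢
  rw [assoc, h1, ← assoc, hy, assoc]

lemma exact_step3 :
    (ShortComplex.mk (pushout.inl m (s.d (c + 1))) (sqq s c V m) (inl_sq s c V m)).Exact := by
  haveI := key_epi s c V m
  rw [ShortComplex.exact_iff_exact_up_to_refinements]
  intro T a ha
  dsimp only [ShortComplex.mk] at ha
  obtain ⟨T1, π1, hπ1, b, hb⟩ := surjective_up_to_refinements_of_epi
    (biprod.desc (pushout.inl m (s.d (c + 1))) (pushout.inr m (s.d (c + 1)))) a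
  have hcomp : biprod.desc (pushout.inl m (s.d (c + 1))) (pushout.inr m (s.d (c + 1))) ≫
      sqq s c V m = biprod.snd ≫ s.d c := by
    apply biprod.hom_ext' <;> simp
  have hb2 : (b ≫ biprod.snd) ≫ s.d c = 0 := by
    have h : (b ≫ biprod.desc (pushout.inl m (s.d (c + 1))) (pushout.inr m (s.d (c + 1)))) ≫
        sqq s c V m = 0 := by rw [← hb, assoc, ha, comp_zero]
    rw [assoc, hcomp] at h
    rw [assoc]
    exact h
  obtain ⟨T2, π2, hπ2, z, hz⟩ := (s.ex c).exact_up_to_refinements (b ≫ biprod.snd) hb2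
  dsimp only [ShortComplex.mk] at hz
  refine ⟨T2, π2 ≫ π1, epi_comp _ _, π2 ≫ (b ≫ biprod.fst) + z ≫ m, ?_⟩
  dsimp only [ShortComplex.mk]
  have hbe : biprod.desc (pushout.inl m (s.d (c + 1))) (pushout.inr m (s.d (c + 1))) =
      biprod.fst ≫ pushout.inl m (s.d (c + 1)) + biprod.snd ≫ pushout.inr m (s.d (c + 1)) := by
    apply biprod.hom_ext' <;> simp
  rw [assoc, hb, hbe]
  simp only [Preadditive.comp_add, Preadditive.add_comp, assoc]
  congr 1
  rw [reassoc_of% hz, pushout.condition]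

lemma sqq_d (c' : ℕ) (m' : s.ob (c' + 3) ⟶ V) : sqq s (c' + 1) V m' ≫ s.d c' = 0 := by
  apply pushout.hom_ext
  · rw [← assoc, inl_sq, zero_comp, comp_zero]
  · rw [← assoc, inr_sq, s.w c', comp_zero]

lemma exact_step4 (c' : ℕ) (m' : s.ob (c' + 3) ⟶ V) :
    (ShortComplex.mk (sqq s (c' + 1) V m') (s.d c') (sqq_d s V c' m')).Exact := by
  rw [ShortComplex.exact_iff_exact_up_to_refinements]
  intro T a ha
  dsimp only [ShortComplex.mk] at ha
  obtain ⟨T', π, hπ, x, hx⟩ := (s.ex c').exact_up_to_refinements a ha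
  dsimp only [ShortComplex.mk] at hx
  refine ⟨T', π, hπ, x ≫ pushout.inr m' (s.d (c' + 2)), ?_⟩
  dsimp only [ShortComplex.mk]
  rw [assoc, inr_sq, hx]


/-- The modified extension. -/
noncomputable def stepSeq [Mono m] (hc : c + 2 ≤ j) : ExtSeq A j X Y where
  ob := sOb s c V m
  d := sD s c V m
  iso0 := eqToIso (sOb_ne s c V m 0 (by omega) (by omega)) ≪≫ s.iso0
  isoTop := eqToIso (sOb_ne s c V m (j + 1) (by omega) (by omega)) ≪≫ s.isoTop
  is_zero i hi := by
    rw [sOb_ne s c V m i (by omega) (by omega)]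
    exact s.is_zero i hi
  w i := by
    by_cases h2 : i = c + 2
    · subst h2
      rw [sD_of s c V m (c + 3) (by omega) (by omega) (by omega), sD_top]
      simp only [assoc, eqToHom_trans_assoc, eqToHom_refl, id_comp]
      rw [reassoc_of% s.w (c + 2)]
      simp
    by_cases h1 : i = c + 1
    · subst h1
      rw [sD_top, sD_mid]
      simp only [assoc, eqToHom_trans_assoc, eqToHom_refl, id_comp]
      rw [pushout.condition_assoc, reassoc_of% s.w (c + 1)]
      simp
    by_cases h0 : i = c
    · subst h0
      rw [sD_mid, sD_q]
      simp only [assoc, eqToHom_trans_assoc, eqToHom_refl, id_comp]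
      rw [reassoc_of% inl_sq s i V m]
      simp
    by_cases hm1 : c = i + 1
    · subst hm1
      rw [sD_q, sD_of s (i + 1) V m i (by omega) (by omega) (by omega)]
      simp only [assoc, eqToHom_trans_assoc, eqToHom_refl, id_comp]
      rw [reassoc_of% sqq_d s V i m]
      simp
    · rw [sD_of s c V m (i + 1) (by omega) (by omega) (by omega),
        sD_of s c V m i h2 h1 h0]
      simp only [assoc, eqToHom_trans_assoc, eqToHom_refl, id_comp]
      rw [reassoc_of% s.w i]
      simp
  ex i := by
    by_cases h2 : i = c + 2
    · subst h2
      exact exact_congr_aux (sD_of s c V m (c + 3) (by omega) (by omega) (by omega))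
        (sD_top s c V m)
        (exact_conj_aux (sOb_ne s c V m (c + 4) (by omega) (by omega))
          (sOb_ne s c V m (c + 3) (by omega) (by omega)) (sOb_top s c V m)
          (exact_comp_mono_aux m (s.ex (c + 2))))
    by_cases h1 : i = c + 1
    · subst h1
      exact exact_congr_aux (sD_top s c V m) (sD_mid s c V m)
        (exact_conj_aux (sOb_ne s c V m (c + 3) (by omega) (by omega)) (sOb_top s c V m)
          (sOb_mid s c V m) (exact_step2 s c V m))
    by_cases h0 : i = c
    · subst h0
      exact exact_congr_aux (sD_mid s i V m) (sD_q s i V m)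
        (exact_conj_aux (sOb_top s i V m) (sOb_mid s i V m)
          (sOb_ne s i V m i (by omega) (by omega)) (exact_step3 s i V m))
    by_cases hm1 : c = i + 1
    · subst hm1
      exact exact_congr_aux (sD_q s (i + 1) V m)
        (sD_of s (i + 1) V m i (by omega) (by omega) (by omega))
        (exact_conj_aux (sOb_mid s (i + 1) V m)
          (sOb_ne s (i + 1) V m (i + 1) (by omega) (by omega))
          (sOb_ne s (i + 1) V m i (by omega) (by omega)) (exact_step4 s V i m))
    · exact exact_congr_aux (sD_of s c V m (i + 1) (by omega) (by omega) (by omega))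
        (sD_of s c V m i h2 h1 h0)
        (exact_conj_aux (sOb_ne s c V m (i + 2) (by omega) (by omega))
          (sOb_ne s c V m (i + 1) (by omega) (by omega))
          (sOb_ne s c V m i h2 h1) (s.ex i))
  epi0 := by
    by_cases h0 : c = 0
    · subst h0
      rw [sD_q]
      haveI : Epi (sqq s 0 V m) := by
        haveI := s.epi0
        exact epi_of_epi_fac (inr_sq s 0 V m)
      infer_instance
    · rw [sD_of s c V m 0 (by omega) (by omega) (by omega)]
      haveI := s.epi0
      infer_instance

/-- The comparison morphism components. -/
noncomputable def sφ (i : ℕ) : s.ob i ⟶ sOb s c V m i :=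
  if h2 : i = c + 2 then
    eqToHom (congrArg s.ob h2) ≫ m ≫
      eqToHom (show V = sOb s c V m i by rw [h2, sOb_top])
  else if h1 : i = c + 1 then
    eqToHom (congrArg s.ob h1) ≫ pushout.inr m (s.d (c + 1)) ≫
      eqToHom (show pushout m (s.d (c + 1)) = sOb s c V m i by
        rw [h1]; exact (sOb_mid s c V m).symm)
  else eqToHom (sOb_ne s c V m i h2 h1).symm

lemma sφ_top : sφ s c V m (c + 2) = m ≫ eqToHom (sOb_top s c V m).symm := by
  rw [sφ, dif_pos rfl]
  simp

lemma sφ_mid :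
    sφ s c V m (c + 1) = pushout.inr m (s.d (c + 1)) ≫ eqToHom (sOb_mid s c V m).symm := by
  rw [sφ, dif_neg (by omega), dif_pos rfl]
  simp

lemma sφ_of (i : ℕ) (h2 : i ≠ c + 2) (h1 : i ≠ c + 1) :
    sφ s c V m i = eqToHom (sOb_ne s c V m i h2 h1).symm := by
  rw [sφ, dif_neg h2, dif_neg h1]

/-- The comparison morphism of extensions. -/
noncomputable def stepHom [Mono m] (hc : c + 2 ≤ j) : ExtSeqHom s (stepSeq s c V m hc) where
  φ := sφ s c V m
  comm i := by
    show s.d i ≫ sφ s c V m i = sφ s c V m (i + 1) ≫ sD s c V m i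
    by_cases h2 : i = c + 2
    · subst h2
      rw [sφ_top, sφ_of s c V m (c + 3) (by omega) (by omega), sD_top]
      simp
    by_cases h1 : i = c + 1
    · subst h1
      rw [sφ_mid, sφ_top, sD_mid]
      simp only [assoc, eqToHom_trans_assoc, eqToHom_refl, id_comp]
      rw [pushout.condition_assoc]
    by_cases h0 : i = c
    · subst h0
      rw [sφ_of s i V m i (by omega) (by omega), sφ_mid, sD_q]
      simp only [assoc, eqToHom_trans_assoc, eqToHom_refl, id_comp]
      rw [reassoc_of% inr_sq s i V m]
    · rw [sφ_of s c V m i h2 h1, sφ_of s c V m (i + 1) (by omega) (by omega),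
        sD_of s c V m i h2 h1 h0]
      simp
  φ0 := by
    show sφ s c V m 0 = _
    rw [sφ_of s c V m 0 (by omega) (by omega)]
    simp [stepSeq]
  φTop := by
    show sφ s c V m (j + 1) = _
    rw [sφ_of s c V m (j + 1) (by omega) (by omega)]
    simp [stepSeq]

/-- One surgery step: fix position `c + 2` to lie in `𝒰`, touching only positions
`c + 1` and `c + 2`. -/
lemma step_lemma {j : ℕ} {X Y : A} (𝒰 : Set A)
    (hcogen : ∀ X : A, ∃ U ∈ 𝒰, ∃ f : X ⟶ U, Mono f)
    (s : ExtSeq A j X Y) (c : ℕ) (hc : c + 2 ≤ j) :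
    ∃ t : ExtSeq A j X Y, t.ob (c + 2) ∈ 𝒰 ∧
      (∀ i, i ≠ c + 2 → i ≠ c + 1 → t.ob i = s.ob i) ∧ Nonempty (ExtSeqHom s t) := by
  obtain ⟨V, hV, m, hm⟩ := hcogen (s.ob (c + 2))
  haveI := hm
  refine ⟨stepSeq s c V m hc, ?_, ?_, ⟨stepHom s c V m hc⟩⟩
  · rw [show (stepSeq s c V m hc).ob (c + 2) = V from sOb_top s c V m]
    exact hV
  · intro i h2 h1
    exact sOb_ne s c V m i h2 h1

lemma iter_lemma {j : ℕ} {X Y : A} (𝒰 : Set A)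
    (hcogen : ∀ X : A, ∃ U ∈ 𝒰, ∃ f : X ⟶ U, Mono f) (k : ℕ) (s : ExtSeq A j X Y) :
    ∃ t : ExtSeq A j X Y, (∀ i, 2 ≤ i → i ≤ j → j + 1 ≤ i + k → t.ob i ∈ 𝒰) ∧
      YonedaEquiv s t := by
  induction k generalizing s with
  | zero => exact ⟨s, fun i _ hij hik => by omega, Relation.EqvGen.refl s⟩
  | succ k ih =>
    obtain ⟨t₁, ht₁, heq₁⟩ := ih s
    by_cases hday : 2 ≤ j - k ∧ j - k ≤ j ∧ k < j
    · obtain ⟨t₂, ht₂U, ht₂eq, ⟨hom⟩⟩ := step_lemma 𝒰 hcogen t₁ (j - k - 2)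
        (by omega)
      refine ⟨t₂, ?_, Relation.EqvGen.trans _ _ _ heq₁ (Relation.EqvGen.rel _ _ ⟨hom⟩)⟩
      intro i h2i hij hik
      by_cases hi : i = j - k - 2 + 2
      · rw [hi]; exact ht₂U
      · rw [ht₂eq i hi (by omega)]
        exact ht₁ i h2i hij (by omega)
    · refine ⟨t₁, ?_, heq₁⟩
      intro i h2i hij hik
      exact ht₁ i h2i hij (by omega)

end Surgery
/-- if `𝒰` is cogenerating, then every exact sequence
`0 → E_{j+1} → E_j → ⋯ → E_1 → E_0 → 0` is Yoneda equivalent to one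
`0 → E_{j+1} → U_j → ⋯ → U_2 → X → E_0 → 0` with `U_2, …, U_j ∈ 𝒰`. -/
theorem replace_terms_by_cogenerating
    (A : Type u) [Category.{v} A] [Abelian A]
    (𝒰 : Set A)
    (hU0 : ∀ Z : A, IsZero Z → Z ∈ 𝒰)
    (hUadd : ∀ X Y : A, X ∈ 𝒰 → Y ∈ 𝒰 → (X ⊞ Y) ∈ 𝒰)
    (hUiso : ∀ X Y : A, (X ≅ Y) → X ∈ 𝒰 → Y ∈ 𝒰)
    (hcogen : ∀ X : A, ∃ U ∈ 𝒰, ∃ f : X ⟶ U, Mono f)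
    (j : ℕ) (hj : 1 ≤ j) :
    ∀ (X Y : A) (s : ExtSeq A j X Y),
      ∃ t : ExtSeq A j X Y, (∀ i, 2 ≤ i → i ≤ j → t.ob i ∈ 𝒰) ∧ YonedaEquiv s t := by
  intro X Y s
  obtain ⟨t, ht, heq⟩ := iter_lemma 𝒰 hcogen j s
  exact ⟨t, fun i h2 hij => ht i h2 hij (by omega), heq⟩
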